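/- (Ψ-differentiation lowers the order of the Ψ-fractional integral by one.) Let a < b, Ψ : ℝ → ℝ strictly increasing and continuously differentiable on [a,b] with Ψ'(t) > 0 for all t ∈ [a,b], and f : ℝ → ℝ continuous on [a,b]. Then for every γ > 0 and every x ∈ (a,b): (1/Ψ'(x)) d/dx (I^{γ+1;Ψ} f)(x) = (I^{γ;Ψ} f)(x); moreover for γ = 0: (1/Ψ'(x)) d/dx (I^{1;Ψ} f)(x) = f(x). -/

import Mathlib

open Real

/-- Generalized binomial coefficient `binom(γ, n) = γ(γ-1)⋯(γ-n+1)/n!`. -/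
noncomputable def genBinom (γ : ℝ) (n : ℕ) : ℝ :=
  (∏ i ∈ Finset.range n, (γ - (i : ℝ))) / (n.factorial : ℝ)

/-- Ψ-Riemann–Liouville fractional integral of order `α` with base point `a`;
by convention the order-0 integral is the identity. -/
noncomputable def psiI (a : ℝ) (Ψ f : ℝ → ℝ) (α : ℝ) (x : ℝ) : ℝ :=
  if α = 0 then f x
  else (Real.Gamma α)⁻¹ * ∫ t in a..x, deriv Ψ t * (Ψ x - Ψ t) ^ (α - 1) * f t

/-- Ψ-Riemann–Liouville fractional derivative of order `γ` (for `γ ≤ 0` it is the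
fractional integral of order `-γ`, the order-0 case being the identity). -/
noncomputable def psiRLD (a : ℝ) (Ψ f : ℝ → ℝ) (γ : ℝ) (x : ℝ) : ℝ :=
  if γ ≤ 0 then psiI a Ψ f (-γ) x
  else (deriv Ψ x)⁻¹ * deriv (fun y => psiI a Ψ f (1 - γ) y) x

/-- Ψ-Caputo fractional derivative of order `γ` (for `γ ≤ 0` it is the
fractional integral of order `-γ`). -/
noncomputable def psiCD (a : ℝ) (Ψ f : ℝ → ℝ) (γ : ℝ) (x : ℝ) : ℝ :=
  if γ ≤ 0 then psiI a Ψ f (-γ) x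
  else psiI a Ψ (fun t => (deriv Ψ t)⁻¹ * deriv f t) (1 - γ) x

/-- Ψ-Hilfer fractional derivative of order `α` and type `β`. -/
noncomputable def psiHD (a : ℝ) (Ψ f : ℝ → ℝ) (α β : ℝ) (x : ℝ) : ℝ :=
  psiI a Ψ
    (fun y => (deriv Ψ y)⁻¹ * deriv (fun z => psiI a Ψ f ((1 - β) * (1 - α)) z) y)
    (β * (1 - α)) x

/-- Classical Riemann–Liouville fractional integral with base point `a`. -/
noncomputable def rlI (a : ℝ) (α : ℝ) (f : ℝ → ℝ) (x : ℝ) : ℝ :=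
  if α = 0 then f x
  else (Real.Gamma α)⁻¹ * ∫ t in a..x, (x - t) ^ (α - 1) * f t

/-- Classical Riemann–Liouville fractional derivative (fractional integral for `γ ≤ 0`). -/
noncomputable def rlD (a : ℝ) (γ : ℝ) (f : ℝ → ℝ) (x : ℝ) : ℝ :=
  if γ ≤ 0 then rlI a (-γ) f x
  else deriv (fun y => rlI a (1 - γ) f y) x

/-- Classical Caputo fractional derivative (fractional integral for `γ ≤ 0`). -/
noncomputable def capD (a : ℝ) (γ : ℝ) (f : ℝ → ℝ) (x : ℝ) : ℝ :=
  if γ ≤ 0 then rlI a (-γ) f x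
  else rlI a (1 - γ) (deriv f) x

/-- Classical Hilfer fractional derivative of order `α` and type `β`. -/
noncomputable def hilD (a : ℝ) (α β : ℝ) (f : ℝ → ℝ) (x : ℝ) : ℝ :=
  rlI a (β * (1 - α))
    (fun y => deriv (fun z => rlI a ((1 - β) * (1 - α)) f z) y) x

/-- Hadamard fractional integral with base point `a`. -/
noncomputable def hadI (a : ℝ) (α : ℝ) (f : ℝ → ℝ) (x : ℝ) : ℝ :=
  if α = 0 then f x
  else (Real.Gamma α)⁻¹ * ∫ t in a..x, (Real.log x - Real.log t) ^ (α - 1) * f t / t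

/-- Caputo–Hadamard fractional derivative (Hadamard fractional integral for `γ ≤ 0`). -/
noncomputable def chD (a : ℝ) (γ : ℝ) (f : ℝ → ℝ) (x : ℝ) : ℝ :=
  if γ ≤ 0 then hadI a (-γ) f x
  else hadI a (1 - γ) (fun t => t * deriv f t) x

/-- `h` is real-analytic with a power series converging on all of `ℝ`. -/
def EntireReal (h : ℝ → ℝ) : Prop :=
  ∃ p : FormalMultilinearSeries ℝ ℝ ℝ, HasFPowerSeriesOnBall h p 0 ⊤

section PsiAux
open MeasureTheory intervalIntegral Set


private lemma psiAux_hasDeriv {Ψ : ℝ → ℝ} {t : ℝ} (h : 0 < deriv Ψ t) :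
    HasDerivAt Ψ (deriv Ψ t) t := by
  by_cases hd : DifferentiableAt ℝ Ψ t
  · exact hd.hasDerivAt
  · rw [deriv_zero_of_not_differentiableAt hd] at h; exact absurd h (lt_irrefl 0)

private lemma psiAux_contDeriv {a b : ℝ} (hab : a < b) {Ψ : ℝ → ℝ}
    (hΨC1 : ContDiffOn ℝ 1 Ψ (Set.Icc a b))
    (hΨpos : ∀ t ∈ Set.Icc a b, 0 < deriv Ψ t) :
    ContinuousOn (deriv Ψ) (Set.Icc a b) := by
  have hu : UniqueDiffOn ℝ (Set.Icc a b) := uniqueDiffOn_Icc hab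
  have h1 : ContinuousOn (derivWithin Ψ (Set.Icc a b)) (Set.Icc a b) :=
    hΨC1.continuousOn_derivWithin hu le_rfl
  exact h1.congr fun t ht =>
    ((psiAux_hasDeriv (hΨpos t ht)).differentiableAt.derivWithin (hu t ht)).symm

/-- FTC in the `t` variable: integrating the kernel against `Ψ'`. Improper at `x₁ = x'`. -/
private lemma psiAux_ftc_t {a b : ℝ} {Ψ : ℝ → ℝ}
    (hΨmono : StrictMonoOn Ψ (Set.Icc a b))
    (hΨcont : ContinuousOn Ψ (Set.Icc a b))
    (hΨpos : ∀ t ∈ Set.Icc a b, 0 < deriv Ψ t)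
    {γ : ℝ} (hγ : 0 < γ) {t₀ x₁ x' : ℝ}
    (h0 : a ≤ t₀) (h1 : t₀ ≤ x₁) (h2 : x₁ ≤ x') (h3 : x' ≤ b) :
    IntervalIntegrable (fun t => deriv Ψ t * (Ψ x' - Ψ t) ^ (γ - 1)) volume t₀ x₁ ∧
      ∫ t in t₀..x₁, deriv Ψ t * (Ψ x' - Ψ t) ^ (γ - 1) =
        ((Ψ x' - Ψ t₀) ^ γ - (Ψ x' - Ψ x₁) ^ γ) / γ := by
  set g : ℝ → ℝ := fun t => -((Ψ x' - Ψ t) ^ γ / γ) with hg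
  have hsub : Set.Icc t₀ x₁ ⊆ Set.Icc a b := Set.Icc_subset_Icc h0 (h2.trans h3)
  have hx' : x' ∈ Set.Icc a b := ⟨h0.trans (h1.trans h2), h3⟩
  have hgcont : ContinuousOn g (Set.Icc t₀ x₁) := by
    apply ContinuousOn.neg
    apply ContinuousOn.div_const
    apply ContinuousOn.rpow_const
    · exact (continuousOn_const.sub (hΨcont.mono hsub))
    · intro t _; exact Or.inr hγ.le
  have hnonneg : ∀ t ∈ Set.Icc a b, t < x' → 0 < Ψ x' - Ψ t := by
    intro t ht htx; exact sub_pos.2 (hΨmono ht hx' htx)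
  have hgderiv : ∀ t ∈ Set.Ioo t₀ x₁,
      HasDerivAt g (deriv Ψ t * (Ψ x' - Ψ t) ^ (γ - 1)) t := by
    intro t ht
    have htm : t ∈ Set.Icc a b := hsub (Set.Ioo_subset_Icc_self ht)
    have hΨd : HasDerivAt Ψ (deriv Ψ t) t := psiAux_hasDeriv (hΨpos t htm)
    have hbase : HasDerivAt (fun t => Ψ x' - Ψ t) (-(deriv Ψ t)) t :=
      ((hasDerivAt_const t (Ψ x')).sub hΨd).congr_deriv (by simp)
    have hpos : Ψ x' - Ψ t ≠ 0 := (hnonneg t htm (ht.2.trans_le h2)).ne'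
    have := ((hbase.rpow_const (p := γ) (Or.inl hpos)).div_const γ).neg
    refine this.congr_deriv ?_
    have hγ0 : γ ≠ 0 := hγ.ne'
    field_simp
  have hint : IntervalIntegrable (fun t => deriv Ψ t * (Ψ x' - Ψ t) ^ (γ - 1)) volume t₀ x₁ := by
    apply intervalIntegrable_deriv_of_nonneg
    · rwa [Set.uIcc_of_le h1]
    · rwa [min_eq_left h1, max_eq_right h1]
    · rw [min_eq_left h1, max_eq_right h1]
      intro t ht
      have htm : t ∈ Set.Icc a b := hsub (Set.Ioo_subset_Icc_self ht)
      exact mul_nonneg (hΨpos t htm).le (Real.rpow_nonneg (hnonneg t htm (ht.2.trans_le h2)).le _)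
  refine ⟨hint, ?_⟩
  rw [integral_eq_sub_of_hasDeriv_right_of_le h1 hgcont
    (fun t ht => (hgderiv t ht).hasDerivWithinAt) hint]
  simp only [hg]
  ring

/-- FTC in the `s` variable. Improper at `s₀ = t`. -/
private lemma psiAux_ftc_s {a b : ℝ} {Ψ : ℝ → ℝ}
    (hΨmono : StrictMonoOn Ψ (Set.Icc a b))
    (hΨcont : ContinuousOn Ψ (Set.Icc a b))
    (hΨpos : ∀ t ∈ Set.Icc a b, 0 < deriv Ψ t)
    {γ : ℝ} (hγ : 0 < γ) {t s₀ x' : ℝ}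
    (h0 : a ≤ t) (h1 : t ≤ s₀) (h2 : s₀ ≤ x') (h3 : x' ≤ b) :
    IntervalIntegrable (fun s => deriv Ψ s * (Ψ s - Ψ t) ^ (γ - 1)) volume s₀ x' ∧
      ∫ s in s₀..x', deriv Ψ s * (Ψ s - Ψ t) ^ (γ - 1) =
        ((Ψ x' - Ψ t) ^ γ - (Ψ s₀ - Ψ t) ^ γ) / γ := by
  set g : ℝ → ℝ := fun s => (Ψ s - Ψ t) ^ γ / γ with hg
  have hsub : Set.Icc s₀ x' ⊆ Set.Icc a b := Set.Icc_subset_Icc (h0.trans h1) h3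
  have ht : t ∈ Set.Icc a b := ⟨h0, (h1.trans h2).trans h3⟩
  have hgcont : ContinuousOn g (Set.Icc s₀ x') := by
    apply ContinuousOn.div_const
    apply ContinuousOn.rpow_const
    · exact ((hΨcont.mono hsub).sub continuousOn_const)
    · intro s _; exact Or.inr hγ.le
  have hnonneg : ∀ s ∈ Set.Icc a b, t < s → 0 < Ψ s - Ψ t := by
    intro s hs hts; exact sub_pos.2 (hΨmono ht hs hts)
  have hgderiv : ∀ s ∈ Set.Ioo s₀ x',
      HasDerivAt g (deriv Ψ s * (Ψ s - Ψ t) ^ (γ - 1)) s := by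
    intro s hs
    have hsm : s ∈ Set.Icc a b := hsub (Set.Ioo_subset_Icc_self hs)
    have hΨd : HasDerivAt Ψ (deriv Ψ s) s := psiAux_hasDeriv (hΨpos s hsm)
    have hbase : HasDerivAt (fun s => Ψ s - Ψ t) (deriv Ψ s) s := by
      exact (hΨd.sub (hasDerivAt_const s (Ψ t))).congr_deriv (by simp)
    have hpos : Ψ s - Ψ t ≠ 0 := (hnonneg s hsm (h1.trans_lt hs.1)).ne'
    have := (hbase.rpow_const (p := γ) (Or.inl hpos)).div_const γ
    refine this.congr_deriv ?_
    have hγ0 : γ ≠ 0 := hγ.ne'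
    field_simp
  have hint : IntervalIntegrable (fun s => deriv Ψ s * (Ψ s - Ψ t) ^ (γ - 1)) volume s₀ x' := by
    apply intervalIntegrable_deriv_of_nonneg
    · rwa [Set.uIcc_of_le h2]
    · rwa [min_eq_left h2, max_eq_right h2]
    · rw [min_eq_left h2, max_eq_right h2]
      intro s hs
      have hsm : s ∈ Set.Icc a b := hsub (Set.Ioo_subset_Icc_self hs)
      exact mul_nonneg (hΨpos s hsm).le
        (Real.rpow_nonneg (hnonneg s hsm (h1.trans_lt hs.1)).le _)
  refine ⟨hint, ?_⟩
  rw [integral_eq_sub_of_hasDeriv_right_of_le h2 hgcont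
    (fun s hs => (hgderiv s hs).hasDerivWithinAt) hint]
  simp only [hg]
  ring

/-- Integrability of the kernel times a bounded continuous function. -/
private lemma psiAux_sect_int {a b : ℝ} {Ψ f : ℝ → ℝ}
    (hΨmono : StrictMonoOn Ψ (Set.Icc a b))
    (hΨcont : ContinuousOn Ψ (Set.Icc a b))
    (hΨpos : ∀ t ∈ Set.Icc a b, 0 < deriv Ψ t)
    (hc : ContinuousOn (deriv Ψ) (Set.Icc a b))
    (hf : ContinuousOn f (Set.Icc a b)) {M : ℝ}
    (hM : ∀ t ∈ Set.Icc a b, |f t| ≤ M)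
    {γ : ℝ} (hγ : 0 < γ) {t₀ x₁ x' : ℝ}
    (h0 : a ≤ t₀) (h1 : t₀ ≤ x₁) (h2 : x₁ ≤ x') (h3 : x' ≤ b) :
    IntervalIntegrable (fun t => deriv Ψ t * (Ψ x' - Ψ t) ^ (γ - 1) * f t) volume t₀ x₁ := by
  have hsub : Set.Ioc t₀ x₁ ⊆ Set.Icc a b :=
    (Set.Ioc_subset_Icc_self).trans (Set.Icc_subset_Icc h0 (h2.trans h3))
  rw [intervalIntegrable_iff_integrableOn_Ioc_of_le h1]
  have hmeas : AEStronglyMeasurable (fun t => deriv Ψ t * (Ψ x' - Ψ t) ^ (γ - 1) * f t)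
      (volume.restrict (Set.Ioc t₀ x₁)) := by
    have h1m : AEStronglyMeasurable (deriv Ψ) (volume.restrict (Set.Ioc t₀ x₁)) :=
      (hc.mono hsub).aestronglyMeasurable measurableSet_Ioc
    have h2m : AEStronglyMeasurable (fun t => (Ψ x' - Ψ t) ^ (γ - 1))
        (volume.restrict (Set.Ioc t₀ x₁)) := by
      have hb : AEMeasurable (fun t => Ψ x' - Ψ t) (volume.restrict (Set.Ioc t₀ x₁)) :=
        (aemeasurable_const.sub ((hΨcont.mono hsub).aemeasurable measurableSet_Ioc))
      have : AEMeasurable (fun t => (Ψ x' - Ψ t) ^ (γ - 1))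
          (volume.restrict (Set.Ioc t₀ x₁)) := hb.pow_const _
      exact this.aestronglyMeasurable
    have h3m : AEStronglyMeasurable f (volume.restrict (Set.Ioc t₀ x₁)) :=
      (hf.mono hsub).aestronglyMeasurable measurableSet_Ioc
    exact (h1m.mul h2m).mul h3m
  have hbnd : IntegrableOn (fun t => M * (deriv Ψ t * (Ψ x' - Ψ t) ^ (γ - 1)))
      (Set.Ioc t₀ x₁) := by
    have := (intervalIntegrable_iff_integrableOn_Ioc_of_le h1).1
      (psiAux_ftc_t hΨmono hΨcont hΨpos hγ h0 h1 h2 h3).1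
    exact this.const_mul M
  refine Integrable.mono' hbnd hmeas ?_
  rw [ae_restrict_iff' measurableSet_Ioc]
  refine Filter.Eventually.of_forall fun t ht => ?_
  have htm : t ∈ Set.Icc a b := hsub ht
  have hcpos : (0:ℝ) ≤ deriv Ψ t := (hΨpos t htm).le
  have hbase : (0:ℝ) ≤ Ψ x' - Ψ t := by
    rcases eq_or_lt_of_le (ht.2.trans h2 : t ≤ x') with h | h
    · simp [h]
    · exact (sub_pos.2 (hΨmono htm ⟨h0.trans (h1.trans h2), h3⟩ h)).le
  have hk : (0:ℝ) ≤ (Ψ x' - Ψ t) ^ (γ - 1) := Real.rpow_nonneg hbase _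
  calc ‖deriv Ψ t * (Ψ x' - Ψ t) ^ (γ - 1) * f t‖
      = deriv Ψ t * (Ψ x' - Ψ t) ^ (γ - 1) * |f t| := by
        rw [Real.norm_eq_abs, abs_mul, abs_of_nonneg (mul_nonneg hcpos hk)]
    _ ≤ deriv Ψ t * (Ψ x' - Ψ t) ^ (γ - 1) * M :=
        mul_le_mul_of_nonneg_left (hM t htm) (mul_nonneg hcpos hk)
    _ = M * (deriv Ψ t * (Ψ x' - Ψ t) ^ (γ - 1)) := by ring

/-- Hölder-type modulus estimate for the fractional integral `K`. -/
private lemma psiAux_K_est {a b : ℝ} {Ψ f : ℝ → ℝ}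
    (hΨmono : StrictMonoOn Ψ (Set.Icc a b))
    (hΨcont : ContinuousOn Ψ (Set.Icc a b))
    (hΨpos : ∀ t ∈ Set.Icc a b, 0 < deriv Ψ t)
    (hc : ContinuousOn (deriv Ψ) (Set.Icc a b))
    (hf : ContinuousOn f (Set.Icc a b)) {M : ℝ} (hM0 : 0 ≤ M)
    (hM : ∀ t ∈ Set.Icc a b, |f t| ≤ M)
    {γ : ℝ} (hγ : 0 < γ) {s₁ s₂ : ℝ}
    (h0 : a ≤ s₁) (h1 : s₁ ≤ s₂) (h2 : s₂ ≤ b) :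
    |(∫ t in a..s₂, deriv Ψ t * (Ψ s₂ - Ψ t) ^ (γ - 1) * f t) -
        ∫ t in a..s₁, deriv Ψ t * (Ψ s₁ - Ψ t) ^ (γ - 1) * f t| ≤
      M / γ * |(Ψ s₂ - Ψ a) ^ γ - (Ψ s₂ - Ψ s₁) ^ γ - (Ψ s₁ - Ψ a) ^ γ| +
        M / γ * (Ψ s₂ - Ψ s₁) ^ γ := by
  have hs₁ : s₁ ∈ Set.Icc a b := ⟨h0, h1.trans h2⟩
  have hs₂ : s₂ ∈ Set.Icc a b := ⟨h0.trans h1, h2⟩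
  set E : ℝ := (Ψ s₂ - Ψ a) ^ γ - (Ψ s₂ - Ψ s₁) ^ γ - (Ψ s₁ - Ψ a) ^ γ with hE
  -- integrabilities
  have I1 := psiAux_sect_int hΨmono hΨcont hΨpos hc hf hM hγ le_rfl h0 le_rfl (h1.trans h2)
  have I2 := psiAux_sect_int hΨmono hΨcont hΨpos hc hf hM hγ le_rfl h0 h1 h2
  have I3 := psiAux_sect_int hΨmono hΨcont hΨpos hc hf hM hγ h0 h1 le_rfl h2
  -- split K s₂
  have hsplit : (∫ t in a..s₂, deriv Ψ t * (Ψ s₂ - Ψ t) ^ (γ - 1) * f t) =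
      (∫ t in a..s₁, deriv Ψ t * (Ψ s₂ - Ψ t) ^ (γ - 1) * f t) +
        ∫ t in s₁..s₂, deriv Ψ t * (Ψ s₂ - Ψ t) ^ (γ - 1) * f t :=
    (integral_add_adjacent_intervals I2 I3).symm
  set A : ℝ := (∫ t in a..s₁, deriv Ψ t * (Ψ s₂ - Ψ t) ^ (γ - 1) * f t) -
    ∫ t in a..s₁, deriv Ψ t * (Ψ s₁ - Ψ t) ^ (γ - 1) * f t with hA
  set B : ℝ := ∫ t in s₁..s₂, deriv Ψ t * (Ψ s₂ - Ψ t) ^ (γ - 1) * f t with hB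
  have hdecomp : (∫ t in a..s₂, deriv Ψ t * (Ψ s₂ - Ψ t) ^ (γ - 1) * f t) -
      (∫ t in a..s₁, deriv Ψ t * (Ψ s₁ - Ψ t) ^ (γ - 1) * f t) = A + B := by
    rw [hsplit, hA, hB]; ring
  -- kernel FTC values
  have F1 := (psiAux_ftc_t hΨmono hΨcont hΨpos hγ le_rfl h0 le_rfl (h1.trans h2)).2
  have F2 := (psiAux_ftc_t hΨmono hΨcont hΨpos hγ le_rfl h0 h1 h2).2
  have F3 := (psiAux_ftc_t hΨmono hΨcont hΨpos hγ h0 h1 le_rfl h2).2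
  have hzero : (Ψ s₁ - Ψ s₁ : ℝ) ^ γ = 0 := by
    rw [sub_self, Real.zero_rpow hγ.ne']
  have hzero2 : (Ψ s₂ - Ψ s₂ : ℝ) ^ γ = 0 := by
    rw [sub_self, Real.zero_rpow hγ.ne']
  -- bound for B
  have hBbound : |B| ≤ M / γ * (Ψ s₂ - Ψ s₁) ^ γ := by
    have hg : IntervalIntegrable (fun t => M * (deriv Ψ t * (Ψ s₂ - Ψ t) ^ (γ - 1)))
        volume s₁ s₂ :=
      ((psiAux_ftc_t hΨmono hΨcont hΨpos hγ h0 h1 le_rfl h2).1).const_mul M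
    have hbd : ∀ᵐ t ∂(volume.restrict (Set.uIoc s₁ s₂)),
        ‖deriv Ψ t * (Ψ s₂ - Ψ t) ^ (γ - 1) * f t‖ ≤
          M * (deriv Ψ t * (Ψ s₂ - Ψ t) ^ (γ - 1)) := by
      rw [Set.uIoc_of_le h1, ae_restrict_iff' measurableSet_Ioc]
      refine Filter.Eventually.of_forall fun t ht => ?_
      have htm : t ∈ Set.Icc a b := ⟨h0.trans ht.1.le, ht.2.trans h2⟩
      have hcpos : (0:ℝ) ≤ deriv Ψ t := (hΨpos t htm).le
      have hbase : (0:ℝ) ≤ Ψ s₂ - Ψ t := by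
        rcases eq_or_lt_of_le ht.2 with h | h
        · simp [h]
        · exact (sub_pos.2 (hΨmono htm hs₂ h)).le
      have hk := Real.rpow_nonneg hbase (γ - 1)
      rw [Real.norm_eq_abs, abs_mul, abs_of_nonneg (mul_nonneg hcpos hk)]
      calc deriv Ψ t * (Ψ s₂ - Ψ t) ^ (γ - 1) * |f t|
          ≤ deriv Ψ t * (Ψ s₂ - Ψ t) ^ (γ - 1) * M :=
            mul_le_mul_of_nonneg_left (hM t htm) (mul_nonneg hcpos hk)
        _ = M * (deriv Ψ t * (Ψ s₂ - Ψ t) ^ (γ - 1)) := by ring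
    have := intervalIntegral.norm_integral_le_of_norm_le h1
      (by rw [Set.uIoc_of_le h1, ae_restrict_iff' measurableSet_Ioc] at hbd; exact hbd) hg
    rw [Real.norm_eq_abs] at this
    refine this.trans ?_
    rw [intervalIntegral.integral_const_mul, F3, hzero2]
    have hbase0 : (0:ℝ) ≤ Ψ s₂ - Ψ s₁ := by
      have := hΨmono.monotoneOn hs₁ hs₂ h1; linarith
    have hr := Real.rpow_nonneg hbase0 γ
    have hnn : (0:ℝ) ≤ M * (((Ψ s₂ - Ψ s₁) ^ γ - 0) / γ) := by
      rw [sub_zero]; exact mul_nonneg hM0 (div_nonneg hr hγ.le)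
    exact le_of_eq (by ring)
  -- bound for A
  have hAbound : |A| ≤ M / γ * |E| := by
    rcases le_or_gt γ 1 with hγ1 | hγ1
    · -- kernel decreasing in base
      have hg : IntervalIntegrable (fun t => M * (deriv Ψ t * (Ψ s₁ - Ψ t) ^ (γ - 1)) -
          M * (deriv Ψ t * (Ψ s₂ - Ψ t) ^ (γ - 1))) volume a s₁ :=
        (((psiAux_ftc_t hΨmono hΨcont hΨpos hγ le_rfl h0 le_rfl (h1.trans h2)).1).const_mul
          M).sub (((psiAux_ftc_t hΨmono hΨcont hΨpos hγ le_rfl h0 h1 h2).1).const_mul M)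
      have hAeq : A = ∫ t in a..s₁,
          (deriv Ψ t * (Ψ s₂ - Ψ t) ^ (γ - 1) * f t -
            deriv Ψ t * (Ψ s₁ - Ψ t) ^ (γ - 1) * f t) := (integral_sub I2 I1).symm
      have hbd : ∀ᵐ t ∂(volume.restrict (Set.uIoc a s₁)),
          ‖deriv Ψ t * (Ψ s₂ - Ψ t) ^ (γ - 1) * f t -
              deriv Ψ t * (Ψ s₁ - Ψ t) ^ (γ - 1) * f t‖ ≤
            M * (deriv Ψ t * (Ψ s₁ - Ψ t) ^ (γ - 1)) -
              M * (deriv Ψ t * (Ψ s₂ - Ψ t) ^ (γ - 1)) := by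
        rw [Set.uIoc_of_le h0]
        have hae : ∀ᵐ t : ℝ, t ≠ s₁ := by
          rw [MeasureTheory.ae_iff]
          simp only [not_not, Set.setOf_eq_eq_singleton]
          exact measure_singleton s₁
        rw [ae_restrict_iff' measurableSet_Ioc]
        filter_upwards [hae] with t hne' ht
        have htm : t ∈ Set.Icc a b := ⟨ht.1.le, (ht.2.trans h1).trans h2⟩
        have hcpos : (0:ℝ) ≤ deriv Ψ t := (hΨpos t htm).le
        have hts₁ : t < s₁ := lt_of_le_of_ne ht.2 hne'
        have hb1 : (0:ℝ) < Ψ s₁ - Ψ t := sub_pos.2 (hΨmono htm hs₁ hts₁)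
        have hb2 : Ψ s₁ - Ψ t ≤ Ψ s₂ - Ψ t := by
          have := hΨmono.monotoneOn hs₁ hs₂ h1
          linarith
        have hk21 : (Ψ s₂ - Ψ t) ^ (γ - 1) ≤ (Ψ s₁ - Ψ t) ^ (γ - 1) :=
          Real.rpow_le_rpow_of_nonpos hb1 hb2 (by linarith)
        have hk2n : (0:ℝ) ≤ (Ψ s₂ - Ψ t) ^ (γ - 1) :=
          Real.rpow_nonneg (hb1.le.trans hb2) _
        have : |deriv Ψ t * (Ψ s₂ - Ψ t) ^ (γ - 1) * f t -
            deriv Ψ t * (Ψ s₁ - Ψ t) ^ (γ - 1) * f t| =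
            deriv Ψ t * ((Ψ s₁ - Ψ t) ^ (γ - 1) - (Ψ s₂ - Ψ t) ^ (γ - 1)) * |f t| := by
          rw [show deriv Ψ t * (Ψ s₂ - Ψ t) ^ (γ - 1) * f t -
              deriv Ψ t * (Ψ s₁ - Ψ t) ^ (γ - 1) * f t =
              -(deriv Ψ t * ((Ψ s₁ - Ψ t) ^ (γ - 1) - (Ψ s₂ - Ψ t) ^ (γ - 1)) * f t) by
                rw [mul_sub, sub_mul, neg_sub],
            abs_neg, abs_mul, abs_of_nonneg (mul_nonneg hcpos (by linarith))]
        rw [Real.norm_eq_abs, this]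
        calc deriv Ψ t * ((Ψ s₁ - Ψ t) ^ (γ - 1) - (Ψ s₂ - Ψ t) ^ (γ - 1)) * |f t|
            ≤ deriv Ψ t * ((Ψ s₁ - Ψ t) ^ (γ - 1) - (Ψ s₂ - Ψ t) ^ (γ - 1)) * M :=
              mul_le_mul_of_nonneg_left (hM t htm) (mul_nonneg hcpos (by linarith))
          _ = M * (deriv Ψ t * (Ψ s₁ - Ψ t) ^ (γ - 1)) -
              M * (deriv Ψ t * (Ψ s₂ - Ψ t) ^ (γ - 1)) := by ring
      have hle := intervalIntegral.norm_integral_le_of_norm_le h0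
        (by rw [Set.uIoc_of_le h0, ae_restrict_iff' measurableSet_Ioc] at hbd; exact hbd) hg
      rw [Real.norm_eq_abs, ← hAeq] at hle
      refine hle.trans ?_
      rw [intervalIntegral.integral_sub
        ((( psiAux_ftc_t hΨmono hΨcont hΨpos hγ le_rfl h0 le_rfl (h1.trans h2)).1).const_mul M)
        ((( psiAux_ftc_t hΨmono hΨcont hΨpos hγ le_rfl h0 h1 h2).1).const_mul M),
        intervalIntegral.integral_const_mul, intervalIntegral.integral_const_mul, F1, F2, hzero]
      rw [show M * (((Ψ s₁ - Ψ a) ^ γ - 0) / γ) -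
          M * (((Ψ s₂ - Ψ a) ^ γ - (Ψ s₂ - Ψ s₁) ^ γ) / γ) = M / γ * (-E) by rw [hE]; ring]
      exact mul_le_mul_of_nonneg_left (neg_le_abs E) (div_nonneg hM0 hγ.le)
    · -- kernel increasing in base
      have hg : IntervalIntegrable (fun t => M * (deriv Ψ t * (Ψ s₂ - Ψ t) ^ (γ - 1)) -
          M * (deriv Ψ t * (Ψ s₁ - Ψ t) ^ (γ - 1))) volume a s₁ :=
        (((psiAux_ftc_t hΨmono hΨcont hΨpos hγ le_rfl h0 h1 h2).1).const_mul
          M).sub (((psiAux_ftc_t hΨmono hΨcont hΨpos hγ le_rfl h0 le_rfl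
            (h1.trans h2)).1).const_mul M)
      have hAeq : A = ∫ t in a..s₁,
          (deriv Ψ t * (Ψ s₂ - Ψ t) ^ (γ - 1) * f t -
            deriv Ψ t * (Ψ s₁ - Ψ t) ^ (γ - 1) * f t) := (integral_sub I2 I1).symm
      have hbd : ∀ᵐ t ∂(volume.restrict (Set.uIoc a s₁)),
          ‖deriv Ψ t * (Ψ s₂ - Ψ t) ^ (γ - 1) * f t -
              deriv Ψ t * (Ψ s₁ - Ψ t) ^ (γ - 1) * f t‖ ≤
            M * (deriv Ψ t * (Ψ s₂ - Ψ t) ^ (γ - 1)) -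
              M * (deriv Ψ t * (Ψ s₁ - Ψ t) ^ (γ - 1)) := by
        rw [Set.uIoc_of_le h0, ae_restrict_iff' measurableSet_Ioc]
        refine Filter.Eventually.of_forall fun t ht => ?_
        have htm : t ∈ Set.Icc a b := ⟨ht.1.le, (ht.2.trans h1).trans h2⟩
        have hcpos : (0:ℝ) ≤ deriv Ψ t := (hΨpos t htm).le
        have hb1 : (0:ℝ) ≤ Ψ s₁ - Ψ t := by
          rcases eq_or_lt_of_le ht.2 with h | h
          · simp [h]
          · exact (sub_pos.2 (hΨmono htm hs₁ h)).le
        have hb2 : Ψ s₁ - Ψ t ≤ Ψ s₂ - Ψ t := by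
          have := hΨmono.monotoneOn hs₁ hs₂ h1
          linarith
        have hk12 : (Ψ s₁ - Ψ t) ^ (γ - 1) ≤ (Ψ s₂ - Ψ t) ^ (γ - 1) :=
          Real.rpow_le_rpow hb1 hb2 (by linarith)
        have hk1n : (0:ℝ) ≤ (Ψ s₁ - Ψ t) ^ (γ - 1) := Real.rpow_nonneg hb1 _
        have : |deriv Ψ t * (Ψ s₂ - Ψ t) ^ (γ - 1) * f t -
            deriv Ψ t * (Ψ s₁ - Ψ t) ^ (γ - 1) * f t| =
            deriv Ψ t * ((Ψ s₂ - Ψ t) ^ (γ - 1) - (Ψ s₁ - Ψ t) ^ (γ - 1)) * |f t| := by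
          rw [show deriv Ψ t * (Ψ s₂ - Ψ t) ^ (γ - 1) * f t -
              deriv Ψ t * (Ψ s₁ - Ψ t) ^ (γ - 1) * f t =
              deriv Ψ t * ((Ψ s₂ - Ψ t) ^ (γ - 1) - (Ψ s₁ - Ψ t) ^ (γ - 1)) * f t by ring,
            abs_mul, abs_of_nonneg (mul_nonneg hcpos (by linarith))]
        rw [Real.norm_eq_abs, this]
        calc deriv Ψ t * ((Ψ s₂ - Ψ t) ^ (γ - 1) - (Ψ s₁ - Ψ t) ^ (γ - 1)) * |f t|
            ≤ deriv Ψ t * ((Ψ s₂ - Ψ t) ^ (γ - 1) - (Ψ s₁ - Ψ t) ^ (γ - 1)) * M :=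
              mul_le_mul_of_nonneg_left (hM t htm) (mul_nonneg hcpos (by linarith))
          _ = M * (deriv Ψ t * (Ψ s₂ - Ψ t) ^ (γ - 1)) -
              M * (deriv Ψ t * (Ψ s₁ - Ψ t) ^ (γ - 1)) := by ring
      have hle := intervalIntegral.norm_integral_le_of_norm_le h0
        (by rw [Set.uIoc_of_le h0, ae_restrict_iff' measurableSet_Ioc] at hbd; exact hbd) hg
      rw [Real.norm_eq_abs, ← hAeq] at hle
      refine hle.trans ?_
      rw [intervalIntegral.integral_sub
        ((( psiAux_ftc_t hΨmono hΨcont hΨpos hγ le_rfl h0 h1 h2).1).const_mul M)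
        ((( psiAux_ftc_t hΨmono hΨcont hΨpos hγ le_rfl h0 le_rfl
          (h1.trans h2)).1).const_mul M),
        intervalIntegral.integral_const_mul, intervalIntegral.integral_const_mul, F1, F2, hzero]
      rw [show M * (((Ψ s₂ - Ψ a) ^ γ - (Ψ s₂ - Ψ s₁) ^ γ) / γ) -
          M * (((Ψ s₁ - Ψ a) ^ γ - 0) / γ) = M / γ * E by rw [hE]; ring]
      exact mul_le_mul_of_nonneg_left (le_abs_self E) (div_nonneg hM0 hγ.le)
  calc |(∫ t in a..s₂, deriv Ψ t * (Ψ s₂ - Ψ t) ^ (γ - 1) * f t) -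
      ∫ t in a..s₁, deriv Ψ t * (Ψ s₁ - Ψ t) ^ (γ - 1) * f t| = |A + B| := by rw [hdecomp]
    _ ≤ |A| + |B| := abs_add_le A B
    _ ≤ M / γ * |E| + M / γ * (Ψ s₂ - Ψ s₁) ^ γ := add_le_add hAbound hBbound

/-- Continuity of the fractional integral on `[a, b]`. -/
private lemma psiAux_K_cont {a b : ℝ} {Ψ f : ℝ → ℝ}
    (hΨmono : StrictMonoOn Ψ (Set.Icc a b))
    (hΨcont : ContinuousOn Ψ (Set.Icc a b))
    (hΨpos : ∀ t ∈ Set.Icc a b, 0 < deriv Ψ t)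
    (hc : ContinuousOn (deriv Ψ) (Set.Icc a b))
    (hf : ContinuousOn f (Set.Icc a b)) {M : ℝ} (hM0 : 0 ≤ M)
    (hM : ∀ t ∈ Set.Icc a b, |f t| ≤ M)
    {γ : ℝ} (hγ : 0 < γ) :
    ContinuousOn (fun s => ∫ t in a..s, deriv Ψ t * (Ψ s - Ψ t) ^ (γ - 1) * f t)
      (Set.Icc a b) := by
  set K : ℝ → ℝ := fun s => ∫ t in a..s, deriv Ψ t * (Ψ s - Ψ t) ^ (γ - 1) * f t with hK
  intro s₀ hs₀
  set B : ℝ → ℝ := fun s =>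
    M / γ * |(Ψ (max s s₀) - Ψ a) ^ γ - (Ψ (max s s₀) - Ψ (min s s₀)) ^ γ -
        (Ψ (min s s₀) - Ψ a) ^ γ| +
      M / γ * (Ψ (max s s₀) - Ψ (min s s₀)) ^ γ with hBdef
  have hbound : ∀ s ∈ Set.Icc a b, |K s - K s₀| ≤ B s := by
    intro s hs
    rcases le_total s s₀ with h | h
    · have := psiAux_K_est hΨmono hΨcont hΨpos hc hf hM0 hM hγ hs.1 h hs₀.2
      rw [abs_sub_comm]
      simpa [hBdef, max_eq_right h, min_eq_left h] using this
    · have := psiAux_K_est hΨmono hΨcont hΨpos hc hf hM0 hM hγ hs₀.1 h hs.2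
      simpa [hBdef, max_eq_left h, min_eq_right h] using this
  have hmax : ContinuousWithinAt (fun s => Ψ (max s s₀)) (Set.Icc a b) s₀ := by
    refine ContinuousWithinAt.comp (by simpa using hΨcont s₀ hs₀) ?_ ?_
    · simpa using ((continuous_id.max continuous_const).continuousWithinAt
        (s := Set.Icc a b) (x := s₀))
    · intro s hs
      rcases le_total s s₀ with h | h
      · simpa [max_eq_right h] using hs₀
      · simpa [max_eq_left h] using hs
  have hmin : ContinuousWithinAt (fun s => Ψ (min s s₀)) (Set.Icc a b) s₀ := by
    refine ContinuousWithinAt.comp (by simpa using hΨcont s₀ hs₀) ?_ ?_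
    · simpa using ((continuous_id.min continuous_const).continuousWithinAt
        (s := Set.Icc a b) (x := s₀))
    · intro s hs
      rcases le_total s s₀ with h | h
      · simpa [min_eq_left h] using hs
      · simpa [min_eq_right h] using hs₀
  have hBcont : ContinuousWithinAt B (Set.Icc a b) s₀ := by
    apply ContinuousWithinAt.add
    · apply ContinuousWithinAt.mul continuousWithinAt_const
      apply ContinuousWithinAt.abs
      apply ContinuousWithinAt.sub
      apply ContinuousWithinAt.sub
      · exact (hmax.sub continuousWithinAt_const).rpow_const (Or.inr hγ.le)
      · exact (hmax.sub hmin).rpow_const (Or.inr hγ.le)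
      · exact (hmin.sub continuousWithinAt_const).rpow_const (Or.inr hγ.le)
    · exact continuousWithinAt_const.mul ((hmax.sub hmin).rpow_const (Or.inr hγ.le))
  have hB0 : B s₀ = 0 := by
    simp [hBdef, Real.zero_rpow hγ.ne']
  have htendB : Filter.Tendsto B (nhdsWithin s₀ (Set.Icc a b)) (nhds 0) := by
    have := hBcont.tendsto
    rwa [hB0] at this
  have habs : Filter.Tendsto (fun s => |K s - K s₀|) (nhdsWithin s₀ (Set.Icc a b)) (nhds 0) := by
    refine squeeze_zero' (Filter.Eventually.of_forall fun s => abs_nonneg _) ?_ htendB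
    exact Filter.Eventually.mono self_mem_nhdsWithin hbound
  have : Filter.Tendsto K (nhdsWithin s₀ (Set.Icc a b)) (nhds (K s₀)) := by
    rw [tendsto_iff_dist_tendsto_zero]
    simpa [Real.dist_eq] using habs
  exact this

/-- Fubini / semigroup step. -/
private lemma psiAux_fubini {a b : ℝ} (hab : a ≤ b) {Ψ f : ℝ → ℝ}
    (hΨmono : StrictMonoOn Ψ (Set.Icc a b))
    (hΨcont : ContinuousOn Ψ (Set.Icc a b))
    (hΨpos : ∀ t ∈ Set.Icc a b, 0 < deriv Ψ t)
    (hc : ContinuousOn (deriv Ψ) (Set.Icc a b))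
    (hf : ContinuousOn f (Set.Icc a b))
    {M P : ℝ} (hM : ∀ t ∈ Set.Icc a b, |f t| ≤ M)
    (hP : ∀ t ∈ Set.Icc a b, deriv Ψ t ≤ P)
    {γ : ℝ} (hγ : 0 < γ) {y : ℝ} (hy : y ∈ Set.Icc a b) :
    ∫ t in a..y, deriv Ψ t * (Ψ y - Ψ t) ^ γ * f t =
      ∫ s in a..y, γ * (deriv Ψ s *
        ∫ t in a..s, deriv Ψ t * (Ψ s - Ψ t) ^ (γ - 1) * f t) := by
  have hM0 : (0:ℝ) ≤ M := (abs_nonneg _).trans (hM a ⟨le_rfl, hab⟩)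
  have hP0 : (0:ℝ) ≤ P := ((hΨpos a ⟨le_rfl, hab⟩).le).trans (hP a ⟨le_rfl, hab⟩)
  -- clamped (globally defined) versions
  set q : ℝ → ℝ := fun z => min (max z a) b with hq
  have hqcont : Continuous q := (continuous_id.max continuous_const).min continuous_const
  have hqmem : ∀ z, q z ∈ Set.Icc a b := fun z =>
    ⟨le_min (le_max_right z a) hab, min_le_right _ b⟩
  have hqid : ∀ z ∈ Set.Icc a b, q z = z := fun z hz => by
    simp [hq, max_eq_left hz.1, min_eq_left hz.2]
  set C : ℝ → ℝ := fun z => deriv Ψ (q z) with hC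
  set F : ℝ → ℝ := fun z => f (q z) with hF
  set Φ : ℝ → ℝ := fun z => Ψ (q z) with hΦ
  have hCcont : Continuous C := hc.comp_continuous hqcont hqmem
  have hFcont : Continuous F := hf.comp_continuous hqcont hqmem
  have hΦcont : Continuous Φ := hΨcont.comp_continuous hqcont hqmem
  have hCeq : ∀ z ∈ Set.Icc a b, C z = deriv Ψ z := fun z hz => by rw [hC]; simp [hqid z hz]
  have hFeq : ∀ z ∈ Set.Icc a b, F z = f z := fun z hz => by rw [hF]; simp [hqid z hz]
  have hΦeq : ∀ z ∈ Set.Icc a b, Φ z = Ψ z := fun z hz => by rw [hΦ]; simp [hqid z hz]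
  set g : ℝ → ℝ → ℝ := fun s t => γ * (C s * (C t * ((Φ s - Φ t) ^ (γ - 1) * F t))) with hg
  set H : ℝ → ℝ → ℝ := fun s t => if t ≤ s then g s t else 0 with hH
  set μ : Measure ℝ := volume.restrict (Set.Ioc a y) with hμ
  have hμfin : IsFiniteMeasure μ := by
    constructor
    rw [hμ, Measure.restrict_apply_univ]
    exact measure_Ioc_lt_top
  -- measurability of the uncurried kernel
  have hHmeas : Measurable fun p : ℝ × ℝ => H p.1 p.2 := by
    have hgm : Measurable fun p : ℝ × ℝ => g p.1 p.2 := by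
      have hk : Measurable fun p : ℝ × ℝ => (Φ p.1 - Φ p.2) ^ (γ - 1) := by
        have hbase : Measurable fun p : ℝ × ℝ => Φ p.1 - Φ p.2 :=
          ((hΦcont.comp continuous_fst).sub (hΦcont.comp continuous_snd)).measurable
        fun_prop
      exact (measurable_const.mul (((hCcont.comp continuous_fst).measurable).mul
        (((hCcont.comp continuous_snd).measurable).mul
          (hk.mul ((hFcont.comp continuous_snd).measurable)))))
    exact Measurable.ite (measurableSet_le measurable_snd measurable_fst) hgm measurable_const
  have hHsm : AEStronglyMeasurable (fun p : ℝ × ℝ => H p.1 p.2) (μ.prod μ) :=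
    hHmeas.stronglyMeasurable.aestronglyMeasurable
  -- identification of the integrand with original data on the relevant sets
  have hgid : ∀ s ∈ Set.Icc a b, ∀ t ∈ Set.Icc a b, g s t =
      γ * (deriv Ψ s * (deriv Ψ t * ((Ψ s - Ψ t) ^ (γ - 1) * f t))) := by
    intro s hs t ht
    rw [hg]
    simp only
    rw [hCeq s hs, hCeq t ht, hFeq t ht, hΦeq s hs, hΦeq t ht]
  -- section integrability
  have hsect : ∀ s ∈ Set.Ioc a y, IntegrableOn (fun t => g s t) (Set.Ioc a s) volume := by
    intro s hs
    have hsm : s ∈ Set.Icc a b := ⟨hs.1.le, hs.2.trans hy.2⟩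
    have base : IntegrableOn (fun t => deriv Ψ t * (Ψ s - Ψ t) ^ (γ - 1) * f t)
        (Set.Ioc a s) volume := by
      rw [← intervalIntegrable_iff_integrableOn_Ioc_of_le hs.1.le]
      exact psiAux_sect_int hΨmono hΨcont hΨpos hc hf hM hγ le_rfl hs.1.le le_rfl hsm.2
    refine (base.const_mul (γ * deriv Ψ s)).congr ?_
    rw [Filter.EventuallyEq, ae_restrict_iff' measurableSet_Ioc]
    refine Filter.Eventually.of_forall fun t ht => ?_
    have htm : t ∈ Set.Icc a b := ⟨ht.1.le, (ht.2.trans hs.2).trans hy.2⟩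
    rw [hgid s hsm t htm]
    ring
  -- the sections of H as indicators
  have hHsecF : ∀ s, (fun t => H s t) = Set.indicator (Set.Iic s) (fun t => g s t) := by
    intro s
    funext t
    rw [hH]
    simp only [Set.indicator_apply, Set.mem_Iic]
  have hHsec : ∀ s t, H s t = Set.indicator (Set.Iic s) (fun t => g s t) t :=
    fun s t => congrFun (hHsecF s) t
  have hHsec2 : ∀ s t, H s t = Set.indicator (Set.Ici t) (fun s => g s t) s := by
    intro s t
    rw [hH]
    simp only [Set.indicator_apply, Set.mem_Ici]
  have hIicIoc : ∀ s ∈ Set.Ioc a y, Set.Iic s ∩ Set.Ioc a y = Set.Ioc a s := by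
    intro s hs
    ext t
    simp only [Set.mem_inter_iff, Set.mem_Iic, Set.mem_Ioc]
    exact ⟨fun ⟨h1, h2, _⟩ => ⟨h2, h1⟩, fun ⟨h1, h2⟩ => ⟨h2, h1, h2.trans hs.2⟩⟩
  have hint_sec : ∀ s ∈ Set.Ioc a y, Integrable (fun t => H s t) μ := by
    intro s hs
    rw [hHsecF s, hμ, integrable_indicator_iff measurableSet_Iic, IntegrableOn,
      Measure.restrict_restrict measurableSet_Iic, hIicIoc s hs]
    exact hsect s hs
  -- uniform bound for the norm-integrals of sections
  have hbnd_sec : ∀ s ∈ Set.Ioc a y, (∫ t, ‖H s t‖ ∂μ) ≤ P * M * (Ψ b - Ψ a) ^ γ := by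
    intro s hs
    have hsm : s ∈ Set.Icc a b := ⟨hs.1.le, hs.2.trans hy.2⟩
    have h1 : (∫ t, ‖H s t‖ ∂μ) = ∫ t in Set.Ioc a s, ‖g s t‖ := by
      simp only [hHsec, _root_.norm_indicator_eq_indicator_norm]
      rw [hμ, MeasureTheory.integral_indicator measurableSet_Iic,
        Measure.restrict_restrict measurableSet_Iic, hIicIoc s hs]
    rw [h1]
    have hmono2 : ∀ t ∈ Set.Ioc a s, ‖g s t‖ ≤
        (γ * P * M) * (deriv Ψ t * (Ψ s - Ψ t) ^ (γ - 1)) := by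
      intro t ht
      have htm : t ∈ Set.Icc a b := ⟨ht.1.le, (ht.2.trans hs.2).trans hy.2⟩
      have hbase : (0:ℝ) ≤ Ψ s - Ψ t := by
        rcases eq_or_lt_of_le ht.2 with h | h
        · simp [h]
        · exact (sub_pos.2 (hΨmono htm hsm h)).le
      have hk : (0:ℝ) ≤ (Ψ s - Ψ t) ^ (γ - 1) := Real.rpow_nonneg hbase _
      have hct : (0:ℝ) ≤ deriv Ψ t := (hΨpos t htm).le
      have hcs : (0:ℝ) ≤ deriv Ψ s := (hΨpos s hsm).le
      rw [hgid s hsm t htm, Real.norm_eq_abs, abs_mul, abs_mul, abs_mul, abs_mul,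
        abs_of_nonneg hγ.le, abs_of_nonneg hcs, abs_of_nonneg hct, abs_of_nonneg hk]
      calc γ * (deriv Ψ s * (deriv Ψ t * ((Ψ s - Ψ t) ^ (γ - 1) * |f t|)))
          ≤ γ * (P * (deriv Ψ t * ((Ψ s - Ψ t) ^ (γ - 1) * M))) := by
            apply mul_le_mul_of_nonneg_left _ hγ.le
            apply mul_le_mul (hP s hsm) _ (by positivity) hP0
            exact mul_le_mul_of_nonneg_left
              (mul_le_mul_of_nonneg_left (hM t htm) hk) hct
        _ = (γ * P * M) * (deriv Ψ t * (Ψ s - Ψ t) ^ (γ - 1)) := by ring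
    have hib : IntegrableOn (fun t => (γ * P * M) * (deriv Ψ t * (Ψ s - Ψ t) ^ (γ - 1)))
        (Set.Ioc a s) volume :=
      ((intervalIntegrable_iff_integrableOn_Ioc_of_le hs.1.le).1
        (psiAux_ftc_t hΨmono hΨcont hΨpos hγ le_rfl hs.1.le le_rfl hsm.2).1).const_mul _
    have h2 : (∫ t in Set.Ioc a s, ‖g s t‖) ≤
        ∫ t in Set.Ioc a s, (γ * P * M) * (deriv Ψ t * (Ψ s - Ψ t) ^ (γ - 1)) :=
      setIntegral_mono_on (hsect s hs).norm hib measurableSet_Ioc hmono2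
    have h3 : (∫ t in Set.Ioc a s, (γ * P * M) * (deriv Ψ t * (Ψ s - Ψ t) ^ (γ - 1))) =
        (γ * P * M) * (((Ψ s - Ψ a) ^ γ - (Ψ s - Ψ s) ^ γ) / γ) := by
      rw [MeasureTheory.integral_const_mul, ← intervalIntegral.integral_of_le hs.1.le,
        (psiAux_ftc_t hΨmono hΨcont hΨpos hγ le_rfl hs.1.le le_rfl hsm.2).2]
    have h4 : (γ * P * M) * (((Ψ s - Ψ a) ^ γ - (Ψ s - Ψ s) ^ γ) / γ) ≤
        P * M * (Ψ b - Ψ a) ^ γ := by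
      rw [sub_self, Real.zero_rpow hγ.ne', sub_zero,
        show (γ * P * M) * ((Ψ s - Ψ a) ^ γ / γ) = P * M * (Ψ s - Ψ a) ^ γ by
          field_simp]
      have hΨsa : (0:ℝ) ≤ Ψ s - Ψ a := by
        have := hΨmono.monotoneOn ⟨le_rfl, hab⟩ hsm hsm.1; linarith
      have hΨsb : Ψ s - Ψ a ≤ Ψ b - Ψ a := by
        have := hΨmono.monotoneOn hsm ⟨hab, le_rfl⟩ hsm.2; linarith
      exact mul_le_mul_of_nonneg_left (Real.rpow_le_rpow hΨsa hΨsb hγ.le) (by positivity)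
    exact h2.trans (h3.trans_le h4)
  -- integrability on the product
  have hHint : Integrable (fun p : ℝ × ℝ => H p.1 p.2) (μ.prod μ) := by
    rw [integrable_prod_iff hHsm]
    constructor
    · rw [hμ, ae_restrict_iff' measurableSet_Ioc]
      exact Filter.Eventually.of_forall fun s hs => hint_sec s hs
    · refine Integrable.mono' (g := fun _ => P * M * (Ψ b - Ψ a) ^ γ)
        (integrable_const _) hHsm.norm.integral_prod_right' ?_
      rw [hμ, ae_restrict_iff' measurableSet_Ioc]
      refine Filter.Eventually.of_forall fun s hs => ?_
      rw [Real.norm_eq_abs, abs_of_nonneg (integral_nonneg fun t => norm_nonneg _)]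
      exact hbnd_sec s hs
  have hswap : (∫ s, (∫ t, H s t ∂μ) ∂μ) = ∫ t, (∫ s, H s t ∂μ) ∂μ :=
    integral_integral_swap hHint
  -- identify the left-hand side of the swap
  have hLHS : (∫ s, (∫ t, H s t ∂μ) ∂μ) =
      ∫ s in a..y, γ * (deriv Ψ s *
        ∫ t in a..s, deriv Ψ t * (Ψ s - Ψ t) ^ (γ - 1) * f t) := by
    rw [intervalIntegral.integral_of_le hy.1, hμ]
    refine integral_congr_ae ?_
    rw [Filter.EventuallyEq, ae_restrict_iff' measurableSet_Ioc]
    refine Filter.Eventually.of_forall fun s hs => ?_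
    have hsm : s ∈ Set.Icc a b := ⟨hs.1.le, hs.2.trans hy.2⟩
    have h1 : (∫ t in Set.Ioc a y, H s t) = ∫ t in Set.Ioc a s, g s t := by
      simp only [hHsec]
      rw [MeasureTheory.integral_indicator measurableSet_Iic,
        Measure.restrict_restrict measurableSet_Iic, hIicIoc s hs]
    rw [h1, show (∫ t in Set.Ioc a s, g s t) = ∫ t in Set.Ioc a s,
        (γ * deriv Ψ s) * (deriv Ψ t * (Ψ s - Ψ t) ^ (γ - 1) * f t) from
      setIntegral_congr_fun measurableSet_Ioc fun t ht => by
        rw [hgid s hsm t ⟨ht.1.le, (ht.2.trans hs.2).trans hy.2⟩]; ring,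
      MeasureTheory.integral_const_mul, ← intervalIntegral.integral_of_le hs.1.le]
    ring
  -- identify the right-hand side of the swap
  have hRHS : (∫ t, (∫ s, H s t ∂μ) ∂μ) =
      ∫ t in a..y, deriv Ψ t * (Ψ y - Ψ t) ^ γ * f t := by
    rw [intervalIntegral.integral_of_le hy.1, hμ]
    refine integral_congr_ae ?_
    rw [Filter.EventuallyEq, ae_restrict_iff' measurableSet_Ioc]
    refine Filter.Eventually.of_forall fun t ht => ?_
    have htm : t ∈ Set.Icc a b := ⟨ht.1.le, ht.2.trans hy.2⟩
    have h2 : Set.Ici t ∩ Set.Ioc a y = Set.Icc t y := by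
      ext s
      simp only [Set.mem_inter_iff, Set.mem_Ici, Set.mem_Ioc, Set.mem_Icc]
      exact ⟨fun ⟨h1', _, h3'⟩ => ⟨h1', h3'⟩, fun ⟨h1', h2'⟩ => ⟨h1', ht.1.trans_le h1', h2'⟩⟩
    have h3 : (∫ s in Set.Ioc a y, H s t) = ∫ s in Set.Ioc t y, g s t := by
      simp only [hHsec2]
      rw [MeasureTheory.integral_indicator measurableSet_Ici,
        Measure.restrict_restrict measurableSet_Ici, h2, integral_Icc_eq_integral_Ioc]
    rw [h3, show (∫ s in Set.Ioc t y, g s t) = ∫ s in Set.Ioc t y,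
        (γ * (deriv Ψ t * f t)) * (deriv Ψ s * (Ψ s - Ψ t) ^ (γ - 1)) from
      setIntegral_congr_fun measurableSet_Ioc fun s hs => by
        rw [hgid s ⟨ht.1.le.trans hs.1.le, hs.2.trans hy.2⟩ t htm]; ring,
      MeasureTheory.integral_const_mul, ← intervalIntegral.integral_of_le ht.2,
      (psiAux_ftc_s hΨmono hΨcont hΨpos hγ ht.1.le le_rfl ht.2 hy.2).2,
      sub_self, Real.zero_rpow hγ.ne', sub_zero]
    field_simp
  rw [← hRHS, ← hswap, hLHS]

/-- Ψ-differentiation lowers the order of the Ψ-fractional integral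
by one; for order one it recovers the function. -/
theorem psiI_deriv_lowers_order
    (a b : ℝ) (hab : a < b) (Ψ : ℝ → ℝ)
    (hΨmono : StrictMonoOn Ψ (Set.Icc a b))
    (hΨC1 : ContDiffOn ℝ 1 Ψ (Set.Icc a b))
    (hΨpos : ∀ t ∈ Set.Icc a b, 0 < deriv Ψ t)
    (f : ℝ → ℝ) (hf : ContinuousOn f (Set.Icc a b))
    (γ : ℝ) (hγ : 0 < γ)
    (x : ℝ) (hx : x ∈ Set.Ioo a b) :
    (deriv Ψ x)⁻¹ * deriv (fun y => psiI a Ψ f (γ + 1) y) x = psiI a Ψ f γ x ∧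
    (deriv Ψ x)⁻¹ * deriv (fun y => psiI a Ψ f 1 y) x = f x := by
  have hΨcont : ContinuousOn Ψ (Set.Icc a b) := hΨC1.continuousOn
  have hc : ContinuousOn (deriv Ψ) (Set.Icc a b) := psiAux_contDeriv hab hΨC1 hΨpos
  obtain ⟨M, hM⟩ : ∃ M, ∀ t ∈ Set.Icc a b, |f t| ≤ M := by
    obtain ⟨M, hM⟩ := (isCompact_Icc).exists_bound_of_continuousOn hf
    exact ⟨M, fun t ht => by simpa [Real.norm_eq_abs] using hM t ht⟩
  obtain ⟨P, hP⟩ : ∃ P, ∀ t ∈ Set.Icc a b, deriv Ψ t ≤ P := by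
    obtain ⟨P, hP⟩ := (isCompact_Icc).exists_bound_of_continuousOn hc
    exact ⟨P, fun t ht => (le_abs_self _).trans (by simpa using hP t ht)⟩
  have hM0 : 0 ≤ M := (abs_nonneg _).trans (hM a ⟨le_rfl, hab.le⟩)
  have hxI : x ∈ Set.Icc a b := Set.Ioo_subset_Icc_self hx
  have hcx : deriv Ψ x ≠ 0 := (hΨpos x hxI).ne'
  have hIccNhds : Set.Icc a b ∈ nhds x := Icc_mem_nhds hx.1 hx.2
  have hsub : Set.uIcc a x ⊆ Set.Icc a b := by
    rw [Set.uIcc_of_le hx.1.le]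
    exact Set.Icc_subset_Icc le_rfl hx.2.le
  constructor
  · -- first statement
    set K : ℝ → ℝ := fun s => ∫ t in a..s, deriv Ψ t * (Ψ s - Ψ t) ^ (γ - 1) * f t with hKdef
    have hKcont : ContinuousOn K (Set.Icc a b) :=
      psiAux_K_cont hΨmono hΨcont hΨpos hc hf hM0 hM hγ
    have hEq : ∀ y ∈ Set.Icc a b, psiI a Ψ f (γ + 1) y =
        (Real.Gamma (γ + 1))⁻¹ * ∫ s in a..y, γ * (deriv Ψ s * K s) := by
      intro y hy
      rw [psiI, if_neg (by positivity : (γ + 1 : ℝ) ≠ 0)]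
      congr 1
      have h1 : (∫ t in a..y, deriv Ψ t * (Ψ y - Ψ t) ^ (γ + 1 - 1) * f t) =
          ∫ t in a..y, deriv Ψ t * (Ψ y - Ψ t) ^ γ * f t := by norm_num
      rw [h1]
      exact psiAux_fubini hab.le hΨmono hΨcont hΨpos hc hf hM hP hγ hy
    have hcontKx : ContinuousOn (fun s => γ * (deriv Ψ s * K s)) (Set.Icc a b) :=
      continuousOn_const.mul (hc.mul hKcont)
    have hDer : HasDerivAt (fun y => (Real.Gamma (γ + 1))⁻¹ *
        ∫ s in a..y, γ * (deriv Ψ s * K s))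
        ((Real.Gamma (γ + 1))⁻¹ * (γ * (deriv Ψ x * K x))) x := by
      have hii : IntervalIntegrable (fun s => γ * (deriv Ψ s * K s)) volume a x :=
        (hcontKx.mono hsub).intervalIntegrable
      have hmeasAt : StronglyMeasurableAtFilter (fun s => γ * (deriv Ψ s * K s)) (nhds x) :=
        ⟨Set.Ioo a b, Ioo_mem_nhds hx.1 hx.2,
          (hcontKx.mono Set.Ioo_subset_Icc_self).aestronglyMeasurable measurableSet_Ioo⟩
      have hca : ContinuousAt (fun s => γ * (deriv Ψ s * K s)) x :=
        (hcontKx x hxI).continuousAt hIccNhds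
      exact (intervalIntegral.integral_hasDerivAt_right hii hmeasAt hca).const_mul _
    have hEvEq : (fun y => psiI a Ψ f (γ + 1) y) =ᶠ[nhds x] fun y =>
        (Real.Gamma (γ + 1))⁻¹ * ∫ s in a..y, γ * (deriv Ψ s * K s) := by
      filter_upwards [hIccNhds] with y hy using hEq y hy
    have hderiv : deriv (fun y => psiI a Ψ f (γ + 1) y) x =
        (Real.Gamma (γ + 1))⁻¹ * (γ * (deriv Ψ x * K x)) := by
      rw [Filter.EventuallyEq.deriv_eq hEvEq]
      exact hDer.deriv
    rw [hderiv, psiI, if_neg hγ.ne', Real.Gamma_add_one hγ.ne']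
    have hΓ : Real.Gamma γ ≠ 0 := (Real.Gamma_pos_of_pos hγ).ne'
    field_simp
    ring
  · -- second statement
    have h1 : (fun y => psiI a Ψ f 1 y) = fun y => ∫ t in a..y, deriv Ψ t * f t := by
      funext y
      rw [psiI, if_neg (one_ne_zero), Real.Gamma_one, inv_one, one_mul]
      norm_num
    rw [h1]
    have hcf : ContinuousOn (fun t => deriv Ψ t * f t) (Set.Icc a b) := hc.mul hf
    have hD : HasDerivAt (fun y => ∫ t in a..y, deriv Ψ t * f t)
        (deriv Ψ x * f x) x := by
      refine intervalIntegral.integral_hasDerivAt_right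
        ((hcf.mono hsub).intervalIntegrable)
        ⟨Set.Ioo a b, Ioo_mem_nhds hx.1 hx.2,
          (hcf.mono Set.Ioo_subset_Icc_self).aestronglyMeasurable measurableSet_Ioo⟩
        ((hcf x hxI).continuousAt hIccNhds)
    rw [hD.deriv, inv_mul_cancel_left₀ hcx]

end PsiAux
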